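/- Let M be a finite collection of closed balls in ℝᵈ with positive radii, ν_M its Vietoris–Rips scale and μ_M its Čech scale. Then ν_M ≤ μ_M ≤ √(2d/(d+1))·ν_M. -/

import Mathlib

open Metric EuclideanSpace

open scoped RealInnerProductSpace

/-- Two closed balls with nonnegative radii in a real normed space intersect
iff the distance between centers is at most the sum of radii. -/
lemma aux_balls_inter {E : Type*} [NormedAddCommGroup E] [NormedSpace ℝ E]
    (x y : E) (a b : ℝ) (ha : 0 ≤ a) (hb : 0 ≤ b) (h : dist x y ≤ a + b) :
    (closedBall x a ∩ closedBall y b).Nonempty := by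
  by_cases hxy : dist x y = 0
  · exact ⟨x, by simpa using ha, by simpa [hxy] using hb⟩
  · have hD : 0 < dist x y := lt_of_le_of_ne dist_nonneg (Ne.symm hxy)
    have hab : 0 < a + b := lt_of_lt_of_le hD h
    set α := a / (a + b) with hα
    have hα0 : 0 ≤ α := div_nonneg ha hab.le
    have hβ : 1 - α = b / (a + b) := by rw [hα]; field_simp; ring
    have hβ0 : 0 ≤ 1 - α := by rw [hβ]; exact div_nonneg hb hab.le
    refine ⟨x + α • (y - x), ?_, ?_⟩
    · simp only [mem_closedBall]
      have h1 : dist (x + α • (y - x)) x = α * ‖y - x‖ := by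
        rw [dist_eq_norm]
        simp [norm_smul, abs_of_nonneg hα0]
      have h2 : ‖y - x‖ ≤ a + b := by rw [← dist_eq_norm, dist_comm]; exact h
      rw [h1]
      calc α * ‖y - x‖ ≤ α * (a + b) := mul_le_mul_of_nonneg_left h2 hα0
        _ = a := by rw [hα, div_mul_cancel₀ _ hab.ne']
    · simp only [mem_closedBall]
      have hzy : x + α • (y - x) - y = (1 - α) • (x - y) := by module
      have h1 : dist (x + α • (y - x)) y = (1 - α) * ‖x - y‖ := by
        rw [dist_eq_norm, hzy, norm_smul, Real.norm_eq_abs, abs_of_nonneg hβ0]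
      have h2 : ‖x - y‖ ≤ a + b := by rw [← dist_eq_norm]; exact h
      rw [h1]
      calc (1 - α) * ‖x - y‖ ≤ (1 - α) * (a + b) := mul_le_mul_of_nonneg_left h2 hβ0
        _ = b := by rw [hβ, div_mul_cancel₀ _ hab.ne']

open Metric EuclideanSpace

open scoped RealInnerProductSpace

/-- Generalized Jung / Vietoris–Rips lemma: pairwise intersecting weighted balls have a
common point after scaling by the Jung constant. -/
lemma aux_jung {d m : ℕ} (c : Fin m → EuclideanSpace ℝ (Fin d)) (s : Fin m → ℝ)
    (hs : ∀ i, 0 < s i) (h : ∀ i j, dist (c i) (c j) ≤ s i + s j) :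
    ∃ x, ∀ i, dist x (c i) ≤ Real.sqrt (2 * d / (d + 1)) * s i := by
  set J := Real.sqrt (2 * (d : ℝ) / (d + 1)) with hJ
  have hJ0 : 0 ≤ J := Real.sqrt_nonneg _
  rcases Nat.eq_zero_or_pos m with hm | hm
  · subst hm; exact ⟨0, fun i => i.elim0⟩
  have i0 : Fin m := ⟨0, hm⟩
  have hne : (Finset.univ : Finset (Fin m)).Nonempty := ⟨i0, Finset.mem_univ _⟩
  set f : EuclideanSpace ℝ (Fin d) → ℝ :=
    fun x => Finset.univ.sup' hne (fun i => dist x (c i) / s i) with hf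
  have hfc : Continuous f :=
    Continuous.finset_sup'_apply hne fun i _ =>
      (Continuous.dist continuous_id continuous_const).div_const _
  have hfge : ∀ x i, dist x (c i) / s i ≤ f x := fun x i =>
    Finset.le_sup' (fun j => dist x (c j) / s j) (Finset.mem_univ i)
  have hf0 : ∀ x, 0 ≤ f x := fun x =>
    le_trans (div_nonneg dist_nonneg (hs i0).le) (hfge x i0)
  obtain ⟨x, hxK, hxmin⟩ := (isCompact_closedBall (c i0) (f (c i0) * s i0)).exists_isMinOn
    ⟨c i0, by simp [mul_nonneg (hf0 _) (hs i0).le]⟩ hfc.continuousOn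
  have hglob : ∀ y, f x ≤ f y := by
    intro y
    by_cases hy : y ∈ closedBall (c i0) (f (c i0) * s i0)
    · exact hxmin hy
    · have h1 : f (c i0) * s i0 < dist y (c i0) := by
        rw [mem_closedBall, not_le] at hy; exact hy
      have h2 : f (c i0) < dist y (c i0) / s i0 := by
        rw [lt_div_iff₀ (hs i0)]; exact h1
      have h3 : f x ≤ f (c i0) := hxmin (by simp [mul_nonneg (hf0 _) (hs i0).le])
      exact h3.trans (le_of_lt (h2.trans_le (hfge y i0)))
  set t := f x with htdef
  have ht0 : 0 ≤ t := hf0 x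
  have hti : ∀ i, dist x (c i) ≤ t * s i := fun i => by
    have h1 := hfge x i
    rwa [div_le_iff₀ (hs i)] at h1
  rcases eq_or_lt_of_le ht0 with ht | ht
  · refine ⟨x, fun i => ?_⟩
    have h1 : dist x (c i) ≤ 0 := by simpa [← ht] using hti i
    exact h1.trans (mul_nonneg hJ0 (hs i).le)
  -- t > 0 case
  classical
  set A : Finset (Fin m) := Finset.univ.filter (fun i => t * s i ≤ dist x (c i)) with hAdef
  have hA : ∀ i ∈ A, dist x (c i) = t * s i := fun i hi =>
    le_antisymm (hti i) (by simpa [hAdef] using hi)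
  have hAne : A.Nonempty := by
    obtain ⟨i₁, _, hi₁⟩ := Finset.exists_mem_eq_sup' hne (fun i => dist x (c i) / s i)
    refine ⟨i₁, ?_⟩
    simp only [hAdef, Finset.mem_filter, Finset.mem_univ, true_and]
    have h1 : t = dist x (c i₁) / s i₁ := hi₁
    rw [h1, div_mul_cancel₀ _ (hs i₁).ne']
  -- x lies in the convex hull of the active centers
  have hx_hull : x ∈ convexHull ℝ (c '' (A : Set (Fin m))) := by
    by_contra hnot
    have hfin : (c '' (A : Set (Fin m))).Finite := A.finite_toSet.image c
    obtain ⟨g, u, hgx, hgS⟩ := geometric_hahn_banach_point_closed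
      (convex_convexHull ℝ _) (hfin.isCompact_convexHull ℝ).isClosed hnot
    set v := (InnerProductSpace.toDual ℝ (EuclideanSpace ℝ (Fin d))).symm g with hv
    have hvy : ∀ y, ⟪v, y⟫ = g y := fun y => InnerProductSpace.toDual_symm_apply
    set δ := u - g x with hδ
    have hδ0 : 0 < δ := sub_pos.2 hgx
    have hvi : ∀ i ∈ A, δ ≤ ⟪v, c i - x⟫ := by
      intro i hi
      have h1 : u < g (c i) := hgS _ (subset_convexHull ℝ _ ⟨i, hi, rfl⟩)
      have h2 : ⟪v, c i - x⟫ = g (c i) - g x := by rw [hvy]; exact map_sub g _ _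
      rw [h2]; simp only [hδ]; linarith
    have hvne : v ≠ 0 := by
      intro h0
      obtain ⟨i₁, hi₁⟩ := hAne
      have h1 := hvi i₁ hi₁
      rw [h0, inner_zero_left] at h1; linarith
    have hvnorm : 0 < ‖v‖ := norm_pos_iff.2 hvne
    set ε : ℝ := Finset.univ.inf' hne (fun i =>
      if i ∈ A then δ / ‖v‖ ^ 2 else (t * s i - dist x (c i)) / (2 * ‖v‖)) with hε
    have hinact : ∀ i, i ∉ A → dist x (c i) < t * s i := by
      intro i hiA
      rcases lt_or_ge (dist x (c i)) (t * s i) with h1 | h1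
      · exact h1
      · exact absurd (by simp [hAdef, h1]) hiA
    have hε0 : 0 < ε := by
      rw [hε, Finset.lt_inf'_iff]
      intro i _
      by_cases hiA : i ∈ A
      · simp only [hiA, if_true]; positivity
      · simp only [hiA, if_false]
        have h1 := hinact i hiA
        have h2 : 0 < t * s i - dist x (c i) := by linarith
        positivity
    have hεle : ∀ i : Fin m, ε ≤ (if i ∈ A then δ / ‖v‖ ^ 2
        else (t * s i - dist x (c i)) / (2 * ‖v‖)) := fun i =>
      Finset.inf'_le _ (Finset.mem_univ i)
    have hkey : ∀ i, dist (x + ε • v) (c i) < t * s i := by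
      intro i
      by_cases hiA : i ∈ A
      · have hεb : ε ≤ δ / ‖v‖ ^ 2 := by simpa [hiA] using hεle i
        have hεb' : ε * ‖v‖ ^ 2 ≤ δ := by
          rw [← le_div_iff₀ (by positivity)]; exact hεb
        have hδi := hvi i hiA
        have hsq : dist (x + ε • v) (c i) ^ 2 < dist x (c i) ^ 2 := by
          rw [dist_eq_norm, dist_eq_norm]
          have e1 : x + ε • v - c i = (x - c i) + ε • v := by abel
          rw [e1, norm_add_sq_real]
          have e2 : ⟪x - c i, ε • v⟫ = ε * (-⟪v, c i - x⟫) := by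
            rw [real_inner_smul_right, real_inner_comm]
            rw [show x - c i = -(c i - x) by abel, inner_neg_right]
          have e3 : ‖ε • v‖ ^ 2 = ε ^ 2 * ‖v‖ ^ 2 := by
            rw [norm_smul, mul_pow, Real.norm_eq_abs, sq_abs]
          rw [e2, e3]
          nlinarith [hε0, hδ0]
        have h2 := hA i hiA
        rw [← h2]
        have hd1 : 0 ≤ dist (x + ε • v) (c i) := dist_nonneg
        have hd2 : 0 ≤ dist x (c i) := dist_nonneg
        exact (pow_lt_pow_iff_left₀ hd1 hd2 (by norm_num)).1 hsq
      · have h1 := hinact i hiA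
        have h2 : ε ≤ (t * s i - dist x (c i)) / (2 * ‖v‖) := by simpa [hiA] using hεle i
        have h3 : ε * ‖v‖ ≤ (t * s i - dist x (c i)) / 2 := by
          rw [← div_div] at h2
          calc ε * ‖v‖ ≤ ((t * s i - dist x (c i)) / 2 / ‖v‖) * ‖v‖ :=
                mul_le_mul_of_nonneg_right h2 hvnorm.le
            _ = (t * s i - dist x (c i)) / 2 := div_mul_cancel₀ _ hvnorm.ne'
        calc dist (x + ε • v) (c i) ≤ dist (x + ε • v) x + dist x (c i) := dist_triangle _ _ _
          _ = ε * ‖v‖ + dist x (c i) := by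
              rw [dist_eq_norm]
              simp [norm_smul, abs_of_nonneg hε0.le]
          _ < t * s i := by linarith
    have hlt : f (x + ε • v) < t := by
      rw [hf]
      rw [Finset.sup'_lt_iff]
      intro i _
      rw [div_lt_iff₀ (hs i)]
      exact hkey i
    exact absurd (hglob (x + ε • v)) (not_le.2 hlt)
  -- Carathéodory
  obtain ⟨ι, hι, z, w, hzr, hzi, hwpos, hwsum, hwcm⟩ :=
    eq_pos_convex_span_of_mem_convexHull hx_hull
  letI := hι
  haveI hιne : Nonempty ι := by
    by_contra hcon
    rw [not_nonempty_iff] at hcon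
    rw [Finset.univ_eq_empty, Finset.sum_empty] at hwsum
    exact one_ne_zero hwsum.symm
  set k := Fintype.card ι with hk
  have hk1 : 1 ≤ k := Fintype.card_pos
  have hkd : k ≤ d + 1 := by
    have h1 := hzi.card_le_finrank_succ
    have h2 : Module.finrank ℝ (vectorSpan ℝ (Set.range z)) ≤
        Module.finrank ℝ (EuclideanSpace ℝ (Fin d)) := Submodule.finrank_le _
    rw [finrank_euclideanSpace_fin] at h2
    omega
  have hzA : ∀ i : ι, ∃ j, j ∈ A ∧ c j = z i := by
    intro i
    obtain ⟨j, hj, hcj⟩ := hzr (Set.mem_range_self i)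
    exact ⟨j, Finset.mem_coe.1 hj, hcj⟩
  choose idx hidxA hidxc using hzA
  set σ : ι → ℝ := fun i => s (idx i) with hσ
  have hσpos : ∀ i, 0 < σ i := fun i => hs _
  have hdistz : ∀ i, dist x (z i) = t * σ i := fun i => by
    rw [← hidxc i]; exact hA _ (hidxA i)
  have hpair : ∀ i j, dist (z i) (z j) ≤ σ i + σ j := fun i j => by
    rw [← hidxc i, ← hidxc j]; exact h _ _
  have hk2 : 2 ≤ k := by
    rcases Nat.lt_or_ge k 2 with hlt | hge
    · exfalso
      have hk1' : k = 1 := by omega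
      obtain ⟨i1, hall⟩ := Fintype.card_eq_one_iff.1 hk1'
      have huniv : (Finset.univ : Finset ι) = {i1} := by
        ext i; simp [hall i]
      rw [huniv, Finset.sum_singleton] at hwsum hwcm
      rw [hwsum, one_smul] at hwcm
      have hdz := hdistz i1
      rw [hwcm, dist_self] at hdz
      have := hσpos i1
      nlinarith
    · exact hge
  -- the algebraic computation
  set Q := ∑ i, w i * σ i ^ 2 with hQ
  set L := ∑ i, w i * σ i with hL
  set W2 := ∑ i, (w i * σ i) ^ 2 with hW2
  set vv : ι → EuclideanSpace ℝ (Fin d) := fun i => z i - x with hvdef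
  have hv0 : ∑ i, w i • vv i = 0 := by
    simp only [hvdef, smul_sub]
    rw [Finset.sum_sub_distrib, hwcm, ← Finset.sum_smul, hwsum, one_smul, sub_self]
  have hinner0 : ∑ i, ∑ j, w i * w j * ⟪vv i, vv j⟫ = 0 := by
    have e : ∑ i, ∑ j, w i * w j * ⟪vv i, vv j⟫ = ⟪∑ i, w i • vv i, ∑ j, w j • vv j⟫ := by
      rw [sum_inner]
      refine Finset.sum_congr rfl fun i _ => ?_
      rw [inner_sum]
      refine Finset.sum_congr rfl fun j _ => ?_
      rw [real_inner_smul_left, real_inner_smul_right]; ring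
    rw [e, hv0, inner_zero_left]
  have hnormv : ∀ i, ‖vv i‖ = t * σ i := fun i => by
    rw [hvdef, ← dist_eq_norm, dist_comm, hdistz i]
  have hwnn : ∀ i : ι, 0 ≤ w i := fun i => (hwpos i).le
  have hident : ∑ i, ∑ j, w i * w j * ‖vv i - vv j‖ ^ 2 = 2 * (t ^ 2 * Q) := by
    have e1 : ∀ i j : ι, w i * w j * ‖vv i - vv j‖ ^ 2
        = (w i * ‖vv i‖ ^ 2) * w j + w i * (w j * ‖vv j‖ ^ 2)
          - 2 * (w i * w j * ⟪vv i, vv j⟫) := by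
      intro i j; rw [norm_sub_sq_real]; ring
    have e2 : ∑ i, ∑ j, w i * w j * ‖vv i - vv j‖ ^ 2
        = (∑ i, ∑ j, (w i * ‖vv i‖ ^ 2) * w j) + (∑ i, ∑ j, w i * (w j * ‖vv j‖ ^ 2))
          - 2 * ∑ i, ∑ j, w i * w j * ⟪vv i, vv j⟫ := by
      rw [Finset.mul_sum, ← Finset.sum_add_distrib, ← Finset.sum_sub_distrib]
      refine Finset.sum_congr rfl fun i _ => ?_
      rw [Finset.mul_sum, ← Finset.sum_add_distrib, ← Finset.sum_sub_distrib]
      exact Finset.sum_congr rfl fun j _ => e1 i j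
    have e3 : ∑ i, ∑ j, (w i * ‖vv i‖ ^ 2) * w j = t ^ 2 * Q := by
      rw [← Finset.sum_mul_sum, hwsum, mul_one, hQ, Finset.mul_sum]
      refine Finset.sum_congr rfl fun i _ => ?_
      rw [hnormv i]; ring
    have e4 : ∑ i, ∑ j, w i * (w j * ‖vv j‖ ^ 2) = t ^ 2 * Q := by
      rw [← Finset.sum_mul_sum, hwsum, one_mul, hQ, Finset.mul_sum]
      refine Finset.sum_congr rfl fun j _ => ?_
      rw [hnormv j]; ring
    rw [e2, e3, e4, hinner0]; ring
  have hbound : ∑ i, ∑ j, w i * w j * ‖vv i - vv j‖ ^ 2 + 4 * W2 ≤ 2 * Q + 2 * L ^ 2 := by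
    have hterm : ∀ i j : ι, w i * w j * ‖vv i - vv j‖ ^ 2 + (if i = j then 4 * (w i * σ i) ^ 2 else 0)
        ≤ (w i * σ i ^ 2) * w j + w i * (w j * σ j ^ 2) + 2 * ((w i * σ i) * (w j * σ j)) := by
      intro i j
      by_cases hij : i = j
      · subst hij
        rw [if_pos rfl]
        simp only [sub_self, norm_zero]
        refine le_of_eq ?_
        ring
      · simp only [if_neg hij, add_zero]
        have h1 : ‖vv i - vv j‖ = dist (z i) (z j) := by
          rw [hvdef]
          simp only
          rw [sub_sub_sub_cancel_right, ← dist_eq_norm]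
        have h2 : ‖vv i - vv j‖ ^ 2 ≤ (σ i + σ j) ^ 2 := by
          rw [h1]
          exact pow_le_pow_left₀ dist_nonneg (hpair i j) 2
        calc w i * w j * ‖vv i - vv j‖ ^ 2 ≤ w i * w j * (σ i + σ j) ^ 2 :=
              mul_le_mul_of_nonneg_left h2 (mul_nonneg (hwnn i) (hwnn j))
          _ = (w i * σ i ^ 2) * w j + w i * (w j * σ j ^ 2) + 2 * ((w i * σ i) * (w j * σ j)) := by
              ring
    have hsummed := Finset.sum_le_sum (fun i (_ : i ∈ Finset.univ) =>
      Finset.sum_le_sum (fun j (_ : j ∈ Finset.univ) => hterm i j))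
    have hdiag : ∑ i : ι, ∑ j : ι, (if i = j then 4 * (w i * σ i) ^ 2 else 0) = 4 * W2 := by
      rw [hW2, Finset.mul_sum]
      refine Finset.sum_congr rfl fun i _ => ?_
      rw [Finset.sum_ite_eq]
      simp
    have hrhs : ∑ i : ι, ∑ j : ι, ((w i * σ i ^ 2) * w j + w i * (w j * σ j ^ 2)
        + 2 * ((w i * σ i) * (w j * σ j))) = 2 * Q + 2 * L ^ 2 := by
      have r1 : ∑ i : ι, ∑ j : ι, (w i * σ i ^ 2) * w j = Q := by
        rw [← Finset.sum_mul_sum, hwsum, mul_one]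
      have r2 : ∑ i : ι, ∑ j : ι, w i * (w j * σ j ^ 2) = Q := by
        rw [← Finset.sum_mul_sum, hwsum, one_mul]
      have r3 : ∑ i : ι, ∑ j : ι, (w i * σ i) * (w j * σ j) = L ^ 2 := by
        rw [← Finset.sum_mul_sum, hL]; ring
      calc ∑ i : ι, ∑ j : ι, ((w i * σ i ^ 2) * w j + w i * (w j * σ j ^ 2)
            + 2 * ((w i * σ i) * (w j * σ j)))
          = (∑ i : ι, ∑ j : ι, (w i * σ i ^ 2) * w j) + (∑ i : ι, ∑ j : ι, w i * (w j * σ j ^ 2))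
            + 2 * ∑ i : ι, ∑ j : ι, (w i * σ i) * (w j * σ j) := by
            rw [Finset.mul_sum, ← Finset.sum_add_distrib, ← Finset.sum_add_distrib]
            refine Finset.sum_congr rfl fun i _ => ?_
            rw [Finset.mul_sum, ← Finset.sum_add_distrib, ← Finset.sum_add_distrib]
        _ = 2 * Q + 2 * L ^ 2 := by rw [r1, r2, r3]; ring
    calc ∑ i, ∑ j, w i * w j * ‖vv i - vv j‖ ^ 2 + 4 * W2
        = ∑ i : ι, ∑ j : ι, (w i * w j * ‖vv i - vv j‖ ^ 2
            + (if i = j then 4 * (w i * σ i) ^ 2 else 0)) := by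
          rw [← hdiag, ← Finset.sum_add_distrib]
          refine Finset.sum_congr rfl fun i _ => ?_
          rw [← Finset.sum_add_distrib]
      _ ≤ ∑ i : ι, ∑ j : ι, ((w i * σ i ^ 2) * w j + w i * (w j * σ j ^ 2)
            + 2 * ((w i * σ i) * (w j * σ j))) := hsummed
      _ = 2 * Q + 2 * L ^ 2 := hrhs
  -- Cauchy-Schwarz inequalities
  have hCS1 : L ^ 2 ≤ (k : ℝ) * W2 := by
    have := sq_sum_le_card_mul_sum_sq (s := Finset.univ) (f := fun i : ι => w i * σ i)
    simpa [hL, hW2, Finset.card_univ] using this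
  have hCS2 : L ^ 2 ≤ Q := by
    have hcs := Finset.sum_mul_sq_le_sq_mul_sq Finset.univ (fun i : ι => Real.sqrt (w i))
      (fun i : ι => Real.sqrt (w i) * σ i)
    have c1 : ∀ i : ι, Real.sqrt (w i) * (Real.sqrt (w i) * σ i) = w i * σ i := by
      intro i; rw [← mul_assoc, Real.mul_self_sqrt (hwnn i)]
    have c2 : ∀ i : ι, Real.sqrt (w i) ^ 2 = w i := fun i => Real.sq_sqrt (hwnn i)
    have c3 : ∀ i : ι, (Real.sqrt (w i) * σ i) ^ 2 = w i * σ i ^ 2 := by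
      intro i; rw [mul_pow, c2]
    rw [Finset.sum_congr rfl fun i _ => c1 i, Finset.sum_congr rfl fun i _ => c2 i,
      Finset.sum_congr rfl fun i _ => c3 i, hwsum, one_mul] at hcs
    exact hcs
  have hQpos : 0 < Q := by
    rw [hQ]
    refine Finset.sum_pos (fun i _ => ?_) Finset.univ_nonempty
    have := hσpos i
    have := hwpos i
    positivity
  -- put it together
  have hkR : (2 : ℝ) ≤ (k : ℝ) := by exact_mod_cast hk2
  have hkdR : (k : ℝ) ≤ (d : ℝ) + 1 := by exact_mod_cast hkd
  have hkpos : (0 : ℝ) < (k : ℝ) := by linarith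
  have hd1 : (0 : ℝ) < (d : ℝ) + 1 := by positivity
  have hW2k : L ^ 2 / (k : ℝ) ≤ W2 := by
    rw [div_le_iff₀ hkpos]
    calc L ^ 2 ≤ (k : ℝ) * W2 := hCS1
      _ = W2 * (k : ℝ) := by ring
  have hmain : t ^ 2 * Q ≤ (2 * (d : ℝ) / ((d : ℝ) + 1)) * Q := by
    have h1 : 2 * (t ^ 2 * Q) + 4 * W2 ≤ 2 * Q + 2 * L ^ 2 := by
      have h0 := hbound
      rw [hident] at h0
      exact h0
    have h2 : t ^ 2 * Q ≤ Q + L ^ 2 - 2 * (L ^ 2 / (k : ℝ)) := by linarith [hW2k]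
    have h3 : (1 : ℝ) - 2 / (k : ℝ) ≥ 0 := by
      rw [ge_iff_le, sub_nonneg, div_le_one hkpos]; exact hkR
    have h4 : L ^ 2 * (1 - 2 / (k : ℝ)) ≤ Q * (1 - 2 / (k : ℝ)) :=
      mul_le_mul_of_nonneg_right hCS2 h3
    have e1 : Q + L ^ 2 - 2 * (L ^ 2 / (k : ℝ)) = Q + L ^ 2 * (1 - 2 / (k : ℝ)) := by ring
    have e2 : Q * (2 - 2 / (k : ℝ)) = Q + Q * (1 - 2 / (k : ℝ)) := by ring
    have h5 : t ^ 2 * Q ≤ Q * (2 - 2 / (k : ℝ)) := by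
      rw [e2]
      rw [e1] at h2
      linarith [h4]
    have h6 : 2 / ((d : ℝ) + 1) ≤ 2 / (k : ℝ) := by
      gcongr
    have h7 : (2 : ℝ) - 2 / ((d : ℝ) + 1) = 2 * (d : ℝ) / ((d : ℝ) + 1) := by
      field_simp
      ring
    have h8 : Q * (2 - 2 / (k : ℝ)) ≤ Q * (2 - 2 / ((d : ℝ) + 1)) := by
      apply mul_le_mul_of_nonneg_left _ hQpos.le
      linarith
    calc t ^ 2 * Q ≤ Q * (2 - 2 / (k : ℝ)) := h5
      _ ≤ Q * (2 - 2 / ((d : ℝ) + 1)) := h8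
      _ = (2 * (d : ℝ) / ((d : ℝ) + 1)) * Q := by rw [← h7]; ring
  have hsq : t ^ 2 ≤ 2 * (d : ℝ) / ((d : ℝ) + 1) :=
    le_of_mul_le_mul_right hmain hQpos
  have htJ : t ≤ J := by
    rw [hJ]
    exact (Real.le_sqrt ht0 (by positivity)).2 hsq
  exact ⟨x, fun i => (hti i).trans (mul_le_mul_of_nonneg_right htJ (hs i).le)⟩

theorem stmt_11 {d m : ℕ} (c : Fin m → EuclideanSpace ℝ (Fin d)) (r : Fin m → ℝ)
    (hr : ∀ i, 0 < r i)
    (ν : ℝ) (hν : ν = sInf {lam : ℝ | 0 ≤ lam ∧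
      ∀ i j, (closedBall (c i) (lam * r i) ∩ closedBall (c j) (lam * r j)).Nonempty})
    (μ : ℝ) (hμ : μ = sInf {lam : ℝ | 0 ≤ lam ∧
      (⋂ i, closedBall (c i) (lam * r i)).Nonempty}) :
    ν ≤ μ ∧ μ ≤ Real.sqrt (2 * d / (d + 1)) * ν := by
  classical
  set J := Real.sqrt (2 * (d : ℝ) / ((d : ℝ) + 1)) with hJ
  have hJ0 : 0 ≤ J := Real.sqrt_nonneg _
  set Sν := {lam : ℝ | 0 ≤ lam ∧
      ∀ i j, (closedBall (c i) (lam * r i) ∩ closedBall (c j) (lam * r j)).Nonempty} with hSν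
  set Sμ := {lam : ℝ | 0 ≤ lam ∧ (⋂ i, closedBall (c i) (lam * r i)).Nonempty} with hSμ
  have hbddν : BddBelow Sν := ⟨0, fun lam hlam => hlam.1⟩
  have hbddμ : BddBelow Sμ := ⟨0, fun lam hlam => hlam.1⟩
  have hsub : Sμ ⊆ Sν := by
    rintro lam ⟨h0, p, hp⟩
    exact ⟨h0, fun i j => ⟨p, Set.mem_iInter.1 hp i, Set.mem_iInter.1 hp j⟩⟩
  have hμne : Sμ.Nonempty := by
    rcases Nat.eq_zero_or_pos m with hm | hm
    · subst hm
      refine ⟨0, le_refl _, ?_⟩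
      rw [Set.iInter_of_empty]
      exact ⟨0, Set.mem_univ _⟩
    · have i0 : Fin m := ⟨0, hm⟩
      have hne : (Finset.univ : Finset (Fin m)).Nonempty := ⟨i0, Finset.mem_univ _⟩
      set lam0 := Finset.univ.sup' hne (fun i => dist (c i0) (c i) / r i) with hlam0
      have hlam0i : ∀ i, dist (c i0) (c i) ≤ lam0 * r i := by
        intro i
        have h1 : dist (c i0) (c i) / r i ≤ lam0 :=
          Finset.le_sup' (fun j => dist (c i0) (c j) / r j) (Finset.mem_univ i)
        rwa [div_le_iff₀ (hr i)] at h1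
      have hlam00 : 0 ≤ lam0 := by
        have h1 : dist (c i0) (c i0) / r i0 ≤ lam0 :=
          Finset.le_sup' (fun j => dist (c i0) (c j) / r j) (Finset.mem_univ i0)
        simpa using h1
      exact ⟨lam0, hlam00, ⟨c i0, Set.mem_iInter.2 fun i => hlam0i i⟩⟩
  have hνne : Sν.Nonempty := hμne.mono hsub
  have hchar : ∀ lam, lam ∈ Sν ↔
      (0 ≤ lam ∧ ∀ i j, dist (c i) (c j) ≤ lam * r i + lam * r j) := by
    intro lam
    constructor
    · rintro ⟨h0, h2⟩
      refine ⟨h0, fun i j => ?_⟩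
      obtain ⟨p, hp1, hp2⟩ := h2 i j
      rw [mem_closedBall] at hp1 hp2
      calc dist (c i) (c j) ≤ dist (c i) p + dist p (c j) := dist_triangle _ _ _
        _ ≤ lam * r i + lam * r j := by
            rw [dist_comm (c i) p]
            exact add_le_add hp1 hp2
    · rintro ⟨h0, h2⟩
      exact ⟨h0, fun i j => aux_balls_inter _ _ _ _
        (mul_nonneg h0 (hr i).le) (mul_nonneg h0 (hr j).le) (h2 i j)⟩
  have hclosed : IsClosed Sν := by
    have heq : Sν = Set.Ici (0 : ℝ) ∩
        ⋂ i, ⋂ j, {lam : ℝ | dist (c i) (c j) ≤ lam * r i + lam * r j} := by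
      ext lam
      rw [Set.mem_inter_iff, Set.mem_Ici, Set.mem_iInter]
      constructor
      · intro hmem
        obtain ⟨h0, h2⟩ := (hchar lam).1 hmem
        exact ⟨h0, fun i => Set.mem_iInter.2 fun j => h2 i j⟩
      · rintro ⟨h0, h2⟩
        exact (hchar lam).2 ⟨h0, fun i j => Set.mem_iInter.1 (h2 i) j⟩
    rw [heq]
    refine isClosed_Ici.inter (isClosed_iInter fun i => isClosed_iInter fun j =>
      isClosed_le continuous_const ?_)
    exact (continuous_id.mul continuous_const).add (continuous_id.mul continuous_const)
  have hνmem : ν ∈ Sν := by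
    rw [hν]
    exact hclosed.csInf_mem hνne hbddν
  have hν0 : 0 ≤ ν := hνmem.1
  have hνpair : ∀ i j, dist (c i) (c j) ≤ ν * r i + ν * r j := ((hchar ν).1 hνmem).2
  constructor
  · rw [hν, hμ]
    exact csInf_le_csInf hbddν hμne hsub
  · rcases eq_or_lt_of_le hν0 with hν0eq | hνpos
    · -- ν = 0 : all centers coincide
      have hJν : J * ν = 0 := by rw [← hν0eq, mul_zero]
      have hmem0 : (0 : ℝ) ∈ Sμ := by
        refine ⟨le_refl _, ?_⟩
        rcases Nat.eq_zero_or_pos m with hm | hm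
        · subst hm
          rw [Set.iInter_of_empty]
          exact ⟨0, Set.mem_univ _⟩
        · have i0 : Fin m := ⟨0, hm⟩
          refine ⟨c i0, Set.mem_iInter.2 fun i => ?_⟩
          rw [mem_closedBall, zero_mul]
          have h1 := hνpair i0 i
          rw [← hν0eq] at h1
          simp only [zero_mul, add_zero] at h1
          exact h1
      have : μ ≤ 0 := by
        rw [hμ]
        exact csInf_le hbddμ hmem0
      linarith [hJν]
    · obtain ⟨x, hx⟩ := aux_jung c (fun i => ν * r i)
        (fun i => mul_pos hνpos (hr i)) hνpair
      have hmemJ : J * ν ∈ Sμ := by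
        refine ⟨mul_nonneg hJ0 hν0, ⟨x, Set.mem_iInter.2 fun i => ?_⟩⟩
        rw [mem_closedBall]
        calc dist x (c i) ≤ J * (ν * r i) := hx i
          _ = J * ν * r i := by ring
      rw [hμ]
      exact csInf_le hbddμ hmemJ
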